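/- Let k ≥ 3 be an integer. Let G be an edge-colored graph containing no rainbow matching of size k, and let H be a rainbow representative subgraph of G. Suppose W ⊆ V(G) with |W| = 2k−1 is such that every edge of H has both endpoints in W. If there exist vertices w ∈ W and u ∈ V(G) ∖ W with uw ∈ E(G), then the number of edges of H not incident to w is at most C(2k−3,2) + 1. -/

import Mathlib

/-- `G` (with edge-coloring `c`) contains a rainbow matching of size `k`:
`k` pairwise vertex-disjoint edges of `G` with pairwise distinct colors. -/
def HasRainbowMatching {V α : Type*} (G : SimpleGraph V) (c : Sym2 V → α) (k : ℕ) : Prop :=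
  ∃ M : Finset (Sym2 V), M.card = k ∧ ↑M ⊆ G.edgeSet ∧
    (∀ e ∈ M, ∀ f ∈ M, e ≠ f → ∀ v : V, v ∈ e → v ∉ f) ∧
    Set.InjOn c ↑M

/-- `H` is a rainbow representative subgraph of the edge-colored graph `(G, c)`:
`H` is a (spanning) subgraph of `G`, its edges have pairwise distinct colors, and every
edge of `G` has the same color as some edge of `H` (one edge chosen per color class). -/
def IsRainbowRepresentative {V α : Type*} (G H : SimpleGraph V) (c : Sym2 V → α) : Prop :=
  H ≤ G ∧ Set.InjOn c H.edgeSet ∧ ∀ e ∈ G.edgeSet, ∃ f ∈ H.edgeSet, c e = c f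

open Finset

def IsMat {V : Type*} (M : Finset (Sym2 V)) : Prop :=
  ∀ e ∈ M, ∀ f ∈ M, e ≠ f → ∀ v : V, v ∈ e → v ∉ f

lemma sym2_eq_of_mem {V : Type*} {e : Sym2 V} {a b : V} (ha : a ∈ e) (hb : b ∈ e)
    (hab : a ≠ b) : e = s(a, b) := by
  induction e with
  | _ x y =>
    rw [Sym2.mem_iff] at ha hb
    rcases ha with rfl | rfl <;> rcases hb with rfl | rfl
    · exact absurd rfl hab
    · rfl
    · exact Sym2.eq_swap
    · exact absurd rfl hab

lemma filt_pair {V : Type*} [DecidableEq V] (S : Finset V) (e : Sym2 V)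
    (hd : ¬ e.IsDiag) (hin : ∀ v ∈ e, v ∈ S) :
    (S.filter (· ∈ e)).card = 2 := by
  induction e with
  | _ x y =>
    rw [Sym2.mk_isDiag_iff] at hd
    have hx : x ∈ S := hin x (by simp)
    have hy : y ∈ S := hin y (by simp)
    have heq : S.filter (· ∈ s(x, y)) = {x, y} := by
      ext v
      simp only [Finset.mem_filter, Sym2.mem_iff, Finset.mem_insert, Finset.mem_singleton]
      constructor
      · tauto
      · rintro (rfl | rfl)
        · exact ⟨hx, Or.inl rfl⟩
        · exact ⟨hy, Or.inr rfl⟩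
    rw [heq, Finset.card_insert_of_notMem (by simpa using hd), Finset.card_singleton]

lemma swap_aug {V : Type*} [DecidableEq V] {F M : Finset (Sym2 V)} {a b u u' : V}
    (hMF : M ⊆ F) (hmat : IsMat M) (hab : a ≠ b) (heM : s(a, b) ∈ M)
    (hf : s(a, u') ∈ F) (hg : s(b, u) ∈ F)
    (huu' : u ≠ u')
    (hu : ∀ e ∈ M, u ∉ e) (hu' : ∀ e ∈ M, u' ∉ e) :
    ∃ M' ⊆ F, IsMat M' ∧ M'.card = M.card + 1 := by
  have hua : u ≠ a := fun h => hu _ heM (h ▸ Sym2.mem_mk_left a b)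
  have hub : u ≠ b := fun h => hu _ heM (h ▸ Sym2.mem_mk_right a b)
  have hu'a : u' ≠ a := fun h => hu' _ heM (h ▸ Sym2.mem_mk_left a b)
  have hu'b : u' ≠ b := fun h => hu' _ heM (h ▸ Sym2.mem_mk_right a b)
  refine ⟨insert s(a, u') (insert s(b, u) (M.erase s(a, b))), ?_, ?_, ?_⟩
  · refine Finset.insert_subset hf (Finset.insert_subset hg ?_)
    exact (Finset.erase_subset _ _).trans hMF
  · intro e he f hfm hne v hv
    have hmem : ∀ e' ∈ M.erase s(a, b), e' ∈ M ∧ e' ≠ s(a, b) := by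
      intro e' h; exact ⟨Finset.mem_of_mem_erase h, Finset.ne_of_mem_erase h⟩
    -- facts about membership of a, b, u, u' in edges of M.erase
    have hkey : ∀ e' ∈ M.erase s(a, b), a ∉ e' ∧ b ∉ e' ∧ u ∉ e' ∧ u' ∉ e' := by
      intro e' h
      obtain ⟨h1, h2⟩ := hmem e' h
      refine ⟨hmat _ heM _ h1 (Ne.symm h2) a (Sym2.mem_mk_left a b), 
        hmat _ heM _ h1 (Ne.symm h2) b (Sym2.mem_mk_right a b), hu _ h1, hu' _ h1⟩
    simp only [Finset.mem_insert] at he hfm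
    rcases he with rfl | rfl | he <;> rcases hfm with rfl | rfl | hfm
    · exact absurd rfl hne
    · rcases Sym2.mem_iff.1 hv with rfl | rfl <;>
        simp only [Sym2.mem_iff, not_or] <;> exact ⟨by tauto, by tauto⟩
    · obtain ⟨h1, h2, h3, h4⟩ := hkey _ hfm
      rcases Sym2.mem_iff.1 hv with rfl | rfl
      · exact h1
      · exact h4
    · rcases Sym2.mem_iff.1 hv with rfl | rfl <;>
        simp only [Sym2.mem_iff, not_or] <;> exact ⟨by tauto, by tauto⟩
    · exact absurd rfl hne
    · obtain ⟨h1, h2, h3, h4⟩ := hkey _ hfm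
      rcases Sym2.mem_iff.1 hv with rfl | rfl
      · exact h2
      · exact h3
    · obtain ⟨h1, h2, h3, h4⟩ := hkey _ he
      simp only [Sym2.mem_iff, not_or]
      exact ⟨fun h => h1 (h ▸ hv), fun h => h4 (h ▸ hv)⟩
    · obtain ⟨h1, h2, h3, h4⟩ := hkey _ he
      simp only [Sym2.mem_iff, not_or]
      exact ⟨fun h => h2 (h ▸ hv), fun h => h3 (h ▸ hv)⟩
    · exact hmat _ (Finset.mem_of_mem_erase he) _ (Finset.mem_of_mem_erase hfm) hne v hv
  · have h1 : s(b, u) ∉ M.erase s(a, b) := by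
      intro h
      exact hu _ (Finset.mem_of_mem_erase h) (Sym2.mem_mk_right b u)
    have h2 : s(a, u') ∉ insert s(b, u) (M.erase s(a, b)) := by
      simp only [Finset.mem_insert, not_or]
      constructor
      · intro h
        have := h ▸ Sym2.mem_mk_right a u'
        rcases Sym2.mem_iff.1 this with h' | h'
        · exact hu'b h'
        · exact huu' h'.symm
      · intro h
        exact hu' _ (Finset.mem_of_mem_erase h) (Sym2.mem_mk_right a u')
    rw [Finset.card_insert_of_notMem h2, Finset.card_insert_of_notMem h1,
      Finset.card_erase_of_mem heM]
    have : 1 ≤ M.card := Finset.card_pos.2 ⟨_, heM⟩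
    omega

lemma card_nondiag_sym2' {V : Type*} [DecidableEq V] (T : Finset V) :
    {e ∈ T.sym2 | ¬ e.IsDiag}.card = T.card.choose 2 := by
  have h1 : {e ∈ T.sym2 | e.IsDiag} = T.image Sym2.diag := by
    ext e
    induction e with
    | _ x y =>
      simp only [mem_filter, mem_image, Finset.mk_mem_sym2_iff, Sym2.mk_isDiag_iff]
      constructor
      · rintro ⟨⟨hx, hy⟩, rfl⟩
        exact ⟨x, hx, rfl⟩
      · rintro ⟨a, ha, h⟩
        rw [Sym2.diag, Sym2.eq_iff] at h
        rcases h with ⟨rfl, rfl⟩ | ⟨rfl, rfl⟩ <;> exact ⟨⟨ha, ha⟩, rfl⟩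
  have h2 := Finset.card_filter_add_card_filter_not (s := T.sym2)
    (p := fun e => e.IsDiag)
  rw [h1, Finset.card_image_of_injective _ Sym2.diag_injective, Finset.card_sym2] at h2
  have h3 : (T.card + 1).choose 2 = T.card + T.card.choose 2 := by
    rw [Nat.choose_succ_succ, Nat.choose_one_right]
  omega

lemma exists_matching {V : Type*} [DecidableEq V] (m : ℕ) (S : Finset V)
    (F : Finset (Sym2 V))
    (hS : S.card = 2 * m)
    (hdiag : ∀ e ∈ F, ¬ e.IsDiag)
    (hin : ∀ e ∈ F, ∀ v ∈ e, v ∈ S)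
    (hcard : (m - 1) * (2 * m - 1) + 1 ≤ F.card) :
    ∃ M ⊆ F, M.card = m ∧ IsMat M := by
  classical
  obtain ⟨M, hMmem, hMmax⟩ := Finset.exists_max_image
      (F.powerset.filter fun M => IsMat M) Finset.card
      ⟨∅, Finset.mem_filter.2 ⟨Finset.empty_mem_powerset _, by simp [IsMat]⟩⟩
  rw [Finset.mem_filter, Finset.mem_powerset] at hMmem
  obtain ⟨hMF, hMmat⟩ := hMmem
  by_cases hm : m ≤ M.card
  · obtain ⟨N, hNM, hNcard⟩ := Finset.exists_subset_card_eq hm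
    exact ⟨N, hNM.trans hMF, hNcard, fun e he f hf => hMmat e (hNM he) f (hNM hf)⟩
  push_neg at hm
  exfalso
  have hmax : ∀ M' ⊆ F, IsMat M' → M'.card ≤ M.card := by
    intro M' h1 h2
    exact hMmax M' (Finset.mem_filter.2 ⟨Finset.mem_powerset.2 h1, h2⟩)
  set t := M.card with ht
  set T : Finset V := M.biUnion (fun e => S.filter (· ∈ e)) with hTdef
  have hmemT : ∀ v, v ∈ T ↔ ∃ e ∈ M, v ∈ e := by
    intro v
    simp only [hTdef, Finset.mem_biUnion, Finset.mem_filter]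
    constructor
    · rintro ⟨e, he, _, hv⟩; exact ⟨e, he, hv⟩
    · rintro ⟨e, he, hv⟩; exact ⟨e, he, hin e (hMF he) v hv, hv⟩
  have hTcard : T.card = 2 * t := by
    rw [hTdef, Finset.card_biUnion]
    · rw [Finset.sum_congr rfl
        (fun e he => filt_pair S e (hdiag e (hMF he)) (hin e (hMF he))),
        Finset.sum_const, smul_eq_mul, mul_comm]
    · intro e he f hf hef
      rw [Function.onFun, Finset.disjoint_left]
      intro v hv hv'
      rw [Finset.mem_filter] at hv hv'
      exact hMmat e he f hf hef v hv.2 hv'.2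
  set U : Finset V := S \ T with hUdef
  have hTS : T ⊆ S := by
    intro v hv
    rw [hmemT] at hv
    obtain ⟨e, he, hv⟩ := hv
    exact hin e (hMF he) v hv
  have hUcard : U.card = 2 * m - 2 * t := by
    rw [hUdef, Finset.card_sdiff_of_subset hTS, hS, hTcard]
  have hMT : ∀ e ∈ M, ∀ v ∈ e, v ∈ T := fun e he v hv => (hmemT v).2 ⟨e, he, hv⟩
  -- structure of edges not inside T
  have hstruct : ∀ f ∈ F, (¬ ∀ v ∈ f, v ∈ T) → ∃ a u, f = s(a, u) ∧ a ∈ T ∧ u ∈ U := by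
    intro f hf hnot
    push_neg at hnot
    obtain ⟨q, hqf, hqT⟩ := hnot
    have hqU : q ∈ U := Finset.mem_sdiff.2 ⟨hin f hf q hqf, hqT⟩
    obtain ⟨p, hpf, hpq⟩ : ∃ p ∈ f, p ≠ q := by
      induction f with
      | _ x y =>
        have hd := hdiag _ hf
        rw [Sym2.mk_isDiag_iff] at hd
        rcases Sym2.mem_iff.1 hqf with rfl | rfl
        · exact ⟨y, Sym2.mem_mk_right _ _, fun h => hd h.symm⟩
        · exact ⟨x, Sym2.mem_mk_left _ _, hd⟩
    have hfeq : f = s(p, q) := sym2_eq_of_mem hpf hqf hpq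
    by_cases hpT : p ∈ T
    · exact ⟨p, q, hfeq, hpT, hqU⟩
    exfalso
    -- augment: insert f M is a bigger matching
    have hdisj : ∀ v ∈ f, ∀ e ∈ M, v ∉ e := by
      intro v hv e he hve
      have hvT : v ∈ T := (hmemT v).2 ⟨e, he, hve⟩
      rw [hfeq, Sym2.mem_iff] at hv
      rcases hv with rfl | rfl
      · exact hpT hvT
      · exact hqT hvT
    have hfM : f ∉ M := by
      intro h
      exact hdisj p hpf f h hpf
    have : IsMat (insert f M) := by
      intro e he g hg hne v hv
      simp only [Finset.mem_insert] at he hg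
      rcases he with rfl | he <;> rcases hg with rfl | hg
      · exact absurd rfl hne
      · exact fun hvg => hdisj v hv g hg hvg
      · exact fun hvg => hdisj v hvg e he hv
      · exact hMmat e he g hg hne v hv
    have hle := hmax (insert f M) (Finset.insert_subset hf hMF) this
    rw [Finset.card_insert_of_notMem hfM] at hle
    omega
  set F1 := F.filter (fun f => ∀ v ∈ f, v ∈ T) with hF1
  set F2 := F.filter (fun f => ¬ ∀ v ∈ f, v ∈ T) with hF2
  have hsplit : F1.card + F2.card = F.card :=
    Finset.card_filter_add_card_filter_not _
  have hF1le : F1.card ≤ t * (2 * t - 1) := by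
    have hsub : F1 ⊆ {e ∈ T.sym2 | ¬ e.IsDiag} := by
      intro f hf
      rw [hF1, Finset.mem_filter] at hf
      rw [Finset.mem_filter]
      exact ⟨Finset.mem_sym2_iff.2 hf.2, hdiag f hf.1⟩
    have h2 := Finset.card_le_card hsub
    rw [card_nondiag_sym2', hTcard] at h2
    calc F1.card ≤ (2 * t).choose 2 := h2
      _ = t * (2 * t - 1) := by
        rw [Nat.choose_two_right, mul_assoc, Nat.mul_div_cancel_left _ two_pos]
  have hcover : F2 ⊆ M.biUnion (fun e => F2.filter (fun f => ∃ v, v ∈ f ∧ v ∈ e)) := by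
    intro f hf
    have hf' := hf
    rw [hF2, Finset.mem_filter] at hf'
    obtain ⟨a, u, hfe, haT, huU⟩ := hstruct f hf'.1 hf'.2
    rw [hmemT] at haT
    obtain ⟨e, heM, hae⟩ := haT
    exact Finset.mem_biUnion.2 ⟨e, heM, Finset.mem_filter.2
      ⟨hf, a, by rw [hfe]; exact Sym2.mem_mk_left _ _, hae⟩⟩
  have hperedge : ∀ e ∈ M, (F2.filter (fun f => ∃ v, v ∈ f ∧ v ∈ e)).card ≤ U.card := by
    intro e heM
    by_contra hgt
    push_neg at hgt
    set E := F2.filter (fun f => ∃ v, v ∈ f ∧ v ∈ e) with hE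
    have hEstruct : ∀ f ∈ E, ∃ a u, f = s(a, u) ∧ a ∈ e ∧ u ∈ U := by
      intro f hf
      rw [hE, Finset.mem_filter] at hf
      obtain ⟨hfF2, v, hvf, hve⟩ := hf
      rw [hF2, Finset.mem_filter] at hfF2
      obtain ⟨a, u, rfl, haT, huU⟩ := hstruct f hfF2.1 hfF2.2
      have huT : u ∉ T := (Finset.mem_sdiff.1 huU).2
      have hveT : v ∈ T := (hmemT v).2 ⟨e, heM, hve⟩
      rcases Sym2.mem_iff.1 hvf with rfl | rfl
      · exact ⟨v, u, rfl, hve, huU⟩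
      · exact absurd hveT huT
    have hVne : Nonempty V := ⟨(Quot.out e).1⟩
    let φ : Sym2 V → V := fun f =>
      if h : ∃ x, x ∈ U ∧ x ∈ f then h.choose else Classical.arbitrary V
    have hφ : ∀ f ∈ E, φ f ∈ U ∧ φ f ∈ f := by
      intro f hf
      obtain ⟨a, u, rfl, hae, huU⟩ := hEstruct f hf
      have h : ∃ x, x ∈ U ∧ x ∈ s(a, u) := ⟨u, huU, Sym2.mem_mk_right _ _⟩
      simp only [φ, dif_pos h]
      exact h.choose_spec
    obtain ⟨f, hfE, g, hgE, hfg, hφeq⟩ :=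
      Finset.exists_ne_map_eq_of_card_lt_of_maps_to hgt (fun f hf => (hφ f hf).1)
    obtain ⟨a, u, hfeq, hae, huU⟩ := hEstruct f hfE
    subst hfeq
    obtain ⟨b, u', hgeq, hbe, hu'U⟩ := hEstruct g hgE
    subst hgeq
    have haT : a ∈ T := hMT e heM a hae
    have hbT : b ∈ T := hMT e heM b hbe
    have haU : a ∉ U := fun h => (Finset.mem_sdiff.1 h).2 haT
    have hbU : b ∉ U := fun h => (Finset.mem_sdiff.1 h).2 hbT
    have hφf : φ s(a, u) = u := by
      obtain ⟨h1, h2⟩ := hφ _ hfE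
      rcases Sym2.mem_iff.1 h2 with h | h
      · exact absurd (h ▸ h1) haU
      · exact h
    have hφg : φ s(b, u') = u' := by
      obtain ⟨h1, h2⟩ := hφ _ hgE
      rcases Sym2.mem_iff.1 h2 with h | h
      · exact absurd (h ▸ h1) hbU
      · exact h
    have huu' : u = u' := hφf.symm.trans (hφeq.trans hφg)
    subst huu'
    have hab : a ≠ b := by
      rintro rfl
      exact hfg rfl
    have heab : e = s(a, b) := sym2_eq_of_mem hae hbe hab
    have hU2 : 2 ≤ U.card := by omega
    have hnsub : ¬ E ⊆ {s(a, u), s(b, u)} := by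
      intro hsub
      have h1 := Finset.card_le_card hsub
      have h2 : ({s(a, u), s(b, u)} : Finset (Sym2 V)).card ≤ 2 :=
        (Finset.card_insert_le _ _).trans (by simp)
      omega
    obtain ⟨h, hhE, hhfg⟩ := Finset.not_subset.1 hnsub
    simp only [Finset.mem_insert, Finset.mem_singleton, not_or] at hhfg
    obtain ⟨c, u2, hheq, hce, hu2U⟩ := hEstruct h hhE
    subst hheq
    have hce' : c = a ∨ c = b := by
      rw [heab] at hce
      exact Sym2.mem_iff.1 hce
    have hu2 : u ≠ u2 := by
      rintro rfl
      rcases hce' with rfl | rfl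
      · exact hhfg.1 rfl
      · exact hhfg.2 rfl
    have hUnotM : ∀ x, x ∈ U → ∀ e' ∈ M, x ∉ e' := by
      intro x hx e' he' hv
      exact (Finset.mem_sdiff.1 hx).2 ((hmemT x).2 ⟨e', he', hv⟩)
    have hEF : ∀ x ∈ E, x ∈ F := by
      intro x hx
      rw [hE, Finset.mem_filter] at hx
      rw [hF2, Finset.mem_filter] at hx
      exact hx.1.1
    rcases hce' with rfl | rfl
    · -- edges s(c, u2) and s(b, u), with c = a
      obtain ⟨M', hM'F, hM'mat, hM'card⟩ := swap_aug hMF hMmat hab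
        (by rw [← heab]; exact heM)
        (hEF _ hhE)
        (hEF _ hgE)
        hu2 (hUnotM u huU) (hUnotM u2 hu2U)
      have := hmax M' hM'F hM'mat
      omega
    · -- edges s(c, u2) and s(a, u), with c = b
      obtain ⟨M', hM'F, hM'mat, hM'card⟩ := swap_aug hMF hMmat hab.symm
        (by rw [Sym2.eq_swap, ← heab]; exact heM)
        (hEF _ hhE)
        (hEF _ hfE)
        hu2 (hUnotM u huU) (hUnotM u2 hu2U)
      have := hmax M' hM'F hM'mat
      omega
  have hF2le : F2.card ≤ t * U.card := by
    calc F2.card ≤ (M.biUnion fun e => F2.filter (fun f => ∃ v, v ∈ f ∧ v ∈ e)).card :=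
          Finset.card_le_card hcover
      _ ≤ ∑ e ∈ M, (F2.filter (fun f => ∃ v, v ∈ f ∧ v ∈ e)).card :=
          Finset.card_biUnion_le
      _ ≤ M.card * U.card := by
          have := Finset.sum_le_card_nsmul M _ U.card (fun e he => hperedge e he)
          simpa using this
  obtain ⟨s, rfl⟩ : ∃ s, m = t + 1 + s := ⟨m - t - 1, by omega⟩
  rw [hUcard] at hF2le
  have h1 : 2 * (t + 1 + s) - 2 * t = 2 * s + 2 := by omega
  rw [h1] at hF2le
  have h2 : (t + 1 + s - 1) * (2 * (t + 1 + s) - 1) = (t + s) * (2 * t + 2 * s + 1) := by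
    congr 1 <;> omega
  rw [h2] at hcard
  have hkey : ∀ tt : ℕ, tt * (2 * tt - 1) + tt * (2 * s + 2) ≤ (tt + s) * (2 * tt + 2 * s + 1) := by
    intro tt
    rcases Nat.eq_zero_or_pos tt with rfl | htpos
    · simp
    obtain ⟨r, rfl⟩ : ∃ r, tt = r + 1 := ⟨tt - 1, by omega⟩
    have h3 : 2 * (r + 1) - 1 = 2 * r + 1 := by omega
    rw [h3]
    nlinarith
  linarith [hkey t]

/-- Claim 3.8: let `k ≥ 3`, let `G` be an edge-colored graph with no rainbow matching of
size `k`, and let `H` be a rainbow representative subgraph of `G`. Suppose `W` is a set of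
`2k-1` vertices containing both endpoints of every edge of `H`. If some `w ∈ W` is joined in
`G` to some `u ∉ W`, then the number of edges of `H` not incident to `w` is at most
`C(2k-3,2) + 1`. -/
theorem claim_edges_avoiding_w
    {V α : Type*} [Fintype V] (k : ℕ) (hk : 3 ≤ k)
    (G H : SimpleGraph V) (c : Sym2 V → α)
    (hno : ¬ HasRainbowMatching G c k)
    (hrep : IsRainbowRepresentative G H c)
    (W : Set V) (hW : W.ncard = 2 * k - 1)
    (hHW : ∀ e ∈ H.edgeSet, ∀ v ∈ e, v ∈ W)
    (w : V) (hw : w ∈ W) (u : V) (hu : u ∉ W) (hadj : G.Adj u w) :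
    {e ∈ H.edgeSet | w ∉ e}.ncard ≤ (2 * k - 3).choose 2 + 1 := by
  classical
  by_contra hcon
  push_neg at hcon
  set A : Set (Sym2 V) := {e ∈ H.edgeSet | w ∉ e} with hA
  have hAfin : A.Finite := Set.toFinite A
  have hF0card : A.ncard = hAfin.toFinset.card := Set.ncard_eq_toFinset_card A hAfin
  set F0 : Finset (Sym2 V) := hAfin.toFinset with hF0
  have hF0mem : ∀ e, e ∈ F0 ↔ e ∈ H.edgeSet ∧ w ∉ e := by
    intro e
    rw [hF0, Set.Finite.mem_toFinset]
    exact Iff.rfl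
  -- the H-edge with the same color as s(u, w)
  obtain ⟨f₀, hf₀H, hcf₀⟩ := hrep.2.2 s(u, w) ((SimpleGraph.mem_edgeSet G).2 hadj)
  set F' : Finset (Sym2 V) := F0.erase f₀ with hF'
  have hF'card : (k - 1 - 1) * (2 * (k - 1) - 1) + 1 ≤ F'.card := by
    have h1 : F0.card - 1 ≤ F'.card := Finset.pred_card_le_card_erase
    have hch : (2 * k - 3).choose 2 = (k - 1 - 1) * (2 * (k - 1) - 1) := by
      rw [Nat.choose_two_right]
      have h4 : 2 * k - 3 - 1 = 2 * (k - 2) := by omega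
      rw [h4]
      have h5 : (2 * k - 3) * (2 * (k - 2)) = 2 * ((k - 2) * (2 * k - 3)) := by ring
      rw [h5, Nat.mul_div_cancel_left _ two_pos]
      congr 1 <;> omega
    omega
  -- the vertex set
  have hWfin : W.Finite := Set.toFinite W
  set SW : Finset V := hWfin.toFinset with hSW
  have hSWcard : SW.card = 2 * k - 1 := by
    rw [hSW, ← Set.ncard_eq_toFinset_card W hWfin, hW]
  set S : Finset V := SW.erase w with hSdef
  have hScard : S.card = 2 * (k - 1) := by
    rw [hSdef, Finset.card_erase_of_mem (hWfin.mem_toFinset.2 hw), hSWcard]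
    omega
  have hF'facts : ∀ e ∈ F', e ∈ H.edgeSet ∧ w ∉ e ∧ e ≠ f₀ := by
    intro e he
    rw [hF', Finset.mem_erase, hF0mem] at he
    exact ⟨he.2.1, he.2.2, he.1⟩
  obtain ⟨M, hMF', hMcard, hMmat⟩ := exists_matching (k - 1) S F' hScard
    (fun e he => SimpleGraph.not_isDiag_of_mem_edgeSet H (hF'facts e he).1)
    (fun e he v hv => by
      obtain ⟨h1, h2, _⟩ := hF'facts e he
      refine Finset.mem_erase.2 ⟨fun hvw => h2 (hvw ▸ hv), hWfin.mem_toFinset.2 ?_⟩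
      exact hHW e h1 v hv)
    hF'card
  have hMH : ∀ e ∈ M, e ∈ H.edgeSet := fun e he => (hF'facts e (hMF' he)).1
  have hMw : ∀ e ∈ M, w ∉ e := fun e he => (hF'facts e (hMF' he)).2.1
  have hMf₀ : ∀ e ∈ M, e ≠ f₀ := fun e he => (hF'facts e (hMF' he)).2.2
  have hMW : ∀ e ∈ M, ∀ v ∈ e, v ∈ W := fun e he v hv => hHW e (hMH e he) v hv
  have hnotmem : s(u, w) ∉ M := by
    intro h
    exact hu (hMW _ h u (Sym2.mem_mk_left u w))
  refine hno ⟨insert s(u, w) M, ?_, ?_, ?_, ?_⟩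
  · rw [Finset.card_insert_of_notMem hnotmem, hMcard]
    omega
  · intro e he
    rw [Finset.coe_insert, Set.mem_insert_iff] at he
    rcases he with rfl | he
    · exact (SimpleGraph.mem_edgeSet G).2 hadj
    · exact SimpleGraph.edgeSet_subset_edgeSet.2 hrep.1 (hMH e he)
  · intro e he f hf hne v hv
    simp only [Finset.mem_insert] at he hf
    rcases he with rfl | he <;> rcases hf with rfl | hf
    · exact absurd rfl hne
    · rcases Sym2.mem_iff.1 hv with rfl | rfl
      · exact fun h => hu (hMW f hf v h)
      · exact hMw f hf
    · intro hvf
      rcases Sym2.mem_iff.1 hvf with rfl | rfl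
      · exact hu (hMW e he v hv)
      · exact hMw e he hv
    · exact hMmat e he f hf hne v hv
  · intro x hx y hy hcxy
    rw [Finset.coe_insert, Set.mem_insert_iff] at hx hy
    have hinj := hrep.2.1
    rcases hx with rfl | hx <;> rcases hy with rfl | hy
    · rfl
    · exfalso
      have : y = f₀ := hinj (hMH y hy) hf₀H (by rw [← hcxy, hcf₀])
      exact hMf₀ y hy this
    · exfalso
      have : x = f₀ := hinj (hMH x hx) hf₀H (by rw [hcxy, hcf₀])
      exact hMf₀ x hx this
    · exact hinj (hMH x hx) (hMH y hy) hcxy
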